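/- For every integer p ≥ 3, the function x ↦ (1 - cos(x)/cos(x/p))/x² is strictly decreasing on (0, π/2). -/

import Mathlib

open Real

lemma aux1 {t : ℝ} (h0 : 0 < t) (h : t < π/2) : t * Real.cos t < Real.sin t := by
  have hc : 0 < Real.cos t := Real.cos_pos_of_mem_Ioo ⟨by linarith [Real.pi_pos], h⟩
  have ht := Real.lt_tan h0 h
  rw [Real.tan_eq_sin_div_cos] at ht
  have := (lt_div_iff₀ hc).mp ht
  linarith

lemma aux1' {t : ℝ} (h0 : 0 ≤ t) (h : t ≤ π/2) : t * Real.cos t ≤ Real.sin t := by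
  rcases eq_or_lt_of_le h0 with rfl | h0'
  · simp
  rcases eq_or_lt_of_le h with h' | h'
  · rw [h']; simp
  · exact (aux1 h0' h').le

lemma hasDerivF (t : ℝ) : HasDerivAt (fun t => Real.sin t - t * Real.cos t - t^2 * Real.sin t / 3)
    (t * (Real.sin t - t * Real.cos t) / 3) t := by
  have h1 := Real.hasDerivAt_sin t
  have h2 : HasDerivAt (fun t : ℝ => t * Real.cos t) (1 * Real.cos t + t * (-Real.sin t)) t :=
    (hasDerivAt_id t).mul (Real.hasDerivAt_cos t)
  have h3 : HasDerivAt (fun t : ℝ => t^2 * Real.sin t / 3)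
      ((↑2 * t ^ (2-1) * Real.sin t + t^2 * Real.cos t) / 3) t :=
    ((hasDerivAt_pow 2 t).mul (Real.hasDerivAt_sin t)).div_const 3
  have := (h1.sub h2).sub h3
  refine this.congr_deriv ?_
  norm_num
  ring

lemma aux2 {t : ℝ} (h0 : 0 ≤ t) (h : t ≤ π/2) :
    t * Real.cos t + t^2 * Real.sin t / 3 ≤ Real.sin t := by
  set F : ℝ → ℝ := fun t => Real.sin t - t * Real.cos t - t^2 * Real.sin t / 3 with hF
  have hmono : MonotoneOn F (Set.Icc 0 (π/2)) := by
    apply monotoneOn_of_deriv_nonneg (convex_Icc _ _)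
    · exact Continuous.continuousOn (by continuity)
    · intro x hx
      exact (hasDerivF x).differentiableAt.differentiableWithinAt
    · intro x hx
      rw [interior_Icc] at hx
      rw [(hasDerivF x).deriv]
      have h1 := aux1' hx.1.le hx.2.le
      have h2 : 0 ≤ Real.sin x - x * Real.cos x := by linarith
      have := mul_nonneg hx.1.le h2
      linarith
  have h00 : F 0 = 0 := by simp [hF]
  have hle := hmono (Set.left_mem_Icc.2 (by linarith)) ⟨h0, h⟩ h0
  rw [h00] at hle
  simp only [hF] at hle
  linarith

lemma aux3 {u : ℝ} (h0 : 0 ≤ u) (h : u ≤ π/6) : (0.86 : ℝ) ≤ Real.cos u := by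
  have h1 := Real.one_sub_sq_div_two_le_cos (x := u)
  have hpi := Real.pi_lt_d2
  have hu : u ≤ 0.525 := by linarith
  have hu2 : u^2 ≤ 0.28 := by nlinarith
  linarith

lemma g1_anti {b : ℝ} (hb0 : 0 < b) (hb1 : b < 1) :
    StrictAntiOn (fun x : ℝ => Real.sin (b*x) / x) (Set.Ioo 0 (π/2)) := by
  apply strictAntiOn_of_deriv_neg (convex_Ioo _ _)
  · apply ContinuousOn.div (by fun_prop) continuousOn_id
    intro x hx
    exact ne_of_gt hx.1
  · intro x hx
    rw [interior_Ioo] at hx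
    have hx0 : 0 < x := hx.1
    have h1 : HasDerivAt (fun x : ℝ => Real.sin (b*x)) (Real.cos (b*x) * (b*1)) x :=
      (Real.hasDerivAt_sin (b*x)).comp x ((hasDerivAt_id x).const_mul b)
    have hD : HasDerivAt (fun x : ℝ => Real.sin (b*x) / x)
        ((Real.cos (b*x) * (b*1) * x - Real.sin (b*x) * 1) / x^2) x :=
      h1.div (hasDerivAt_id x) (ne_of_gt hx0)
    rw [hD.deriv]
    apply div_neg_of_neg_of_pos _ (by positivity)
    have h := aux1 (t := b*x) (by positivity) (by nlinarith [hx.2])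
    nlinarith

lemma g2_anti {c : ℝ} (hc0 : 0 < c) (hc : c ≤ 1/3) :
    AntitoneOn (fun x : ℝ => Real.sin ((1+c)/2*x) / (x * Real.cos (c*x)))
      (Set.Ioo 0 (π/2)) := by
  set a : ℝ := (1+c)/2 with ha
  have ha0 : 0 < a := by rw [ha]; linarith
  have ha1 : a ≤ 2/3 := by rw [ha]; linarith
  have hcos_pos : ∀ x : ℝ, x ∈ Set.Ioo 0 (π/2) → 0 < Real.cos (c*x) := by
    intro x hx
    apply Real.cos_pos_of_mem_Ioo
    constructor
    · have : 0 < c * x := mul_pos hc0 hx.1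
      linarith [Real.pi_pos]
    · nlinarith [hx.2, hx.1, Real.pi_pos]
  apply antitoneOn_of_deriv_nonpos (convex_Ioo _ _)
  · apply ContinuousOn.div (by fun_prop) (by fun_prop)
    intro x hx
    exact (mul_pos hx.1 (hcos_pos x hx)).ne'
  all_goals intro x hx
  all_goals rw [interior_Ioo] at hx
  case hf' =>
    have hx0 : 0 < x := hx.1
    have hcp := hcos_pos x hx
    have h1 : HasDerivAt (fun x : ℝ => Real.sin (a*x)) (Real.cos (a*x) * (a*1)) x :=
      (Real.hasDerivAt_sin (a*x)).comp x ((hasDerivAt_id x).const_mul a)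
    have h2 : HasDerivAt (fun x : ℝ => Real.cos (c*x)) (-Real.sin (c*x) * (c*1)) x :=
      (Real.hasDerivAt_cos (c*x)).comp x ((hasDerivAt_id x).const_mul c)
    have h3 : HasDerivAt (fun x : ℝ => x * Real.cos (c*x))
        (1 * Real.cos (c*x) + x * (-Real.sin (c*x) * (c*1))) x :=
      (hasDerivAt_id x).mul h2
    have hD := h1.div h3 (mul_pos hx0 hcp).ne'
    exact hD.differentiableAt.differentiableWithinAt
  case hf'_nonpos =>
    have hx0 : 0 < x := hx.1
    have hcp := hcos_pos x hx
    have h1 : HasDerivAt (fun x : ℝ => Real.sin (a*x)) (Real.cos (a*x) * (a*1)) x :=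
      (Real.hasDerivAt_sin (a*x)).comp x ((hasDerivAt_id x).const_mul a)
    have h2 : HasDerivAt (fun x : ℝ => Real.cos (c*x)) (-Real.sin (c*x) * (c*1)) x :=
      (Real.hasDerivAt_cos (c*x)).comp x ((hasDerivAt_id x).const_mul c)
    have h3 : HasDerivAt (fun x : ℝ => x * Real.cos (c*x))
        (1 * Real.cos (c*x) + x * (-Real.sin (c*x) * (c*1))) x :=
      (hasDerivAt_id x).mul h2
    have hD := h1.div h3 (mul_pos hx0 hcp).ne'
    rw [show deriv (fun x => Real.sin (a*x) / (x * Real.cos (c*x))) x = _ from hD.deriv]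
    apply div_nonpos_of_nonpos_of_nonneg _ (by positivity)
    -- numerator ≤ 0
    have hax0 : 0 ≤ a * x := by positivity
    have hax2 : a * x ≤ π/2 := by nlinarith [hx.2, Real.pi_pos]
    have hsina : 0 ≤ Real.sin (a*x) := Real.sin_nonneg_of_nonneg_of_le_pi hax0
      (by linarith [Real.pi_pos])
    have hcx6 : c * x ≤ π/6 := by nlinarith [hx.2, Real.pi_pos]
    have hcx0 : 0 ≤ c * x := by positivity
    have hcos86 : (0.86 : ℝ) ≤ Real.cos (c*x) := aux3 hcx0 hcx6
    have hA0 := aux2 hax0 hax2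
    -- a*x*cos(a*x) ≤ sin(a*x) - (a*x)^2 * sin(a*x)/3
    have A : a*x*Real.cos (a*x) * Real.cos (c*x)
        ≤ (Real.sin (a*x) - (a*x)^2 * Real.sin (a*x)/3) * Real.cos (c*x) := by
      apply mul_le_mul_of_nonneg_right _ hcp.le
      linarith
    have B : Real.sin (c*x) ≤ c*x := Real.sin_le hcx0
    have E : Real.sin (a*x) * (c*x*Real.sin (c*x)) ≤ Real.sin (a*x) * (c*x*(c*x)) := by
      apply mul_le_mul_of_nonneg_left _ hsina
      exact mul_le_mul_of_nonneg_left B hcx0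
    have hkey : c^2 ≤ 0.86 * a^2 / 3 := by
      have hcc : c^2 ≤ c/3 := by nlinarith
      rw [ha]
      nlinarith
    have C : c^2 * (x^2 * Real.sin (a*x)) ≤ (0.86 * a^2 / 3) * (x^2 * Real.sin (a*x)) := by
      apply mul_le_mul_of_nonneg_right hkey
      positivity
    have D : (0.86 : ℝ) * ((a*x)^2 * Real.sin (a*x)/3)
        ≤ Real.cos (c*x) * ((a*x)^2 * Real.sin (a*x)/3) := by
      apply mul_le_mul_of_nonneg_right hcos86
      positivity
    nlinarith [A, E, C, D]

theorem stmt_8 (p : ℕ) (hp : 3 ≤ p) :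
    StrictAntiOn (fun x : ℝ => (1 - cos x / cos (x / p)) / x ^ 2) (Set.Ioo 0 (π / 2)) := by
  have hp3 : (3:ℝ) ≤ (p:ℝ) := by exact_mod_cast hp
  have hp0 : (0:ℝ) < (p:ℝ) := by linarith
  set c : ℝ := (p:ℝ)⁻¹ with hcdef
  have hc0 : 0 < c := by positivity
  have hc3 : c ≤ 1/3 := by
    rw [hcdef]
    rw [inv_le_comm₀ (by linarith) (by norm_num)]
    norm_num
    linarith
  set a : ℝ := (1+c)/2 with ha
  set b : ℝ := (1-c)/2 with hb
  have hb0 : 0 < b := by rw [hb]; linarith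
  have hb1 : b < 1 := by rw [hb]; linarith
  have hg1 := g1_anti hb0 hb1
  have hg2 := g2_anti hc0 hc3
  have hcos_pos : ∀ x : ℝ, x ∈ Set.Ioo 0 (π/2) → 0 < Real.cos (c*x) := by
    intro x hx
    apply Real.cos_pos_of_mem_Ioo
    constructor
    · have : 0 < c * x := mul_pos hc0 hx.1
      linarith [Real.pi_pos]
    · nlinarith [hx.2, hx.1, Real.pi_pos]
  have key : ∀ z ∈ Set.Ioo 0 (π/2),
      (1 - Real.cos z / Real.cos (z / (p:ℝ))) / z ^ 2
        = 2 * (Real.sin (b*z)/z) * (Real.sin (a*z)/(z * Real.cos (c*z))) := by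
    intro z hz
    have hz0 : 0 < z := hz.1
    have hcp := hcos_pos z hz
    have hzp : z / (p:ℝ) = c * z := by
      rw [hcdef, div_eq_mul_inv, mul_comm]
    rw [hzp]
    have hcc := Real.cos_sub_cos (c*z) z
    have e1 : (c*z + z)/2 = a*z := by rw [ha]; ring
    have e2 : (c*z - z)/2 = -(b*z) := by rw [hb]; ring
    rw [e1, e2, Real.sin_neg] at hcc
    -- hcc : cos (c*z) - cos z = -2 * sin (a*z) * -sin (b*z)
    have hid : Real.cos (c*z) - Real.cos z = 2 * Real.sin (a*z) * Real.sin (b*z) := by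
      rw [hcc]; ring
    field_simp
    rw [mul_comm z b, mul_comm z a]
    linear_combination hid
  intro x hx y hy hxy
  simp only
  rw [key x hx, key y hy]
  have hx0 : 0 < x := hx.1
  have hy0 : 0 < y := hy.1
  have H1 : Real.sin (b*y)/y < Real.sin (b*x)/x := hg1 hx hy hxy
  have H2 : Real.sin (a*y)/(y * Real.cos (c*y)) ≤ Real.sin (a*x)/(x * Real.cos (c*x)) :=
    hg2 hx hy hxy.le
  have hsby : 0 < Real.sin (b*y) := by
    apply Real.sin_pos_of_pos_of_lt_pi (by positivity)
    nlinarith [hy.2, Real.pi_pos]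
  have hsax : 0 < Real.sin (a*x) := by
    apply Real.sin_pos_of_pos_of_lt_pi (by positivity)
    have : a < 1 := by rw [ha]; linarith
    nlinarith [hx.2, Real.pi_pos]
  have P1 : 0 < Real.sin (b*y)/y := by positivity
  have P2 : 0 < Real.sin (a*x)/(x * Real.cos (c*x)) := by
    have := hcos_pos x hx
    positivity
  have s1 : Real.sin (b*y)/y * (Real.sin (a*y)/(y * Real.cos (c*y)))
      ≤ Real.sin (b*y)/y * (Real.sin (a*x)/(x * Real.cos (c*x))) :=
    mul_le_mul_of_nonneg_left H2 P1.le
  have s2 : Real.sin (b*y)/y * (Real.sin (a*x)/(x * Real.cos (c*x)))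
      < Real.sin (b*x)/x * (Real.sin (a*x)/(x * Real.cos (c*x))) :=
    mul_lt_mul_of_pos_right H1 P2
  nlinarith [s1, s2]
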